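/- For every integer T, the code C_{T,n} contains exactly (n−1)! permutations. -/

import Mathlib

/-- Underlying function of the suffix block transposition `κ_{i,s}`:
`j ↦ j` for `j < i`, and `j ↦ i + ((j - i + s) mod (n - i))` for `i ≤ j ≤ n-1`. -/
def kappaFun (n i s : ℕ) (j : Fin n) : Fin n :=
  if h : (j : ℕ) < i then j
  else ⟨i + (((j : ℕ) - i + s) % (n - i)), by
    have hj := j.isLt
    have hpos : 0 < n - i := by omega
    have hm := Nat.mod_lt ((j : ℕ) - i + s) hpos
    omega⟩

theorem kappaFun_injective (n i s : ℕ) : Function.Injective (kappaFun n i s) := by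
  intro a b hab
  unfold kappaFun at hab
  by_cases ha : (a : ℕ) < i <;> by_cases hb : (b : ℕ) < i
  · rw [dif_pos ha, dif_pos hb] at hab
    exact hab
  · rw [dif_pos ha, dif_neg hb] at hab
    have h := congrArg Fin.val hab
    simp only at h
    omega
  · rw [dif_neg ha, dif_pos hb] at hab
    have h := congrArg Fin.val hab
    simp only at h
    omega
  · rw [dif_neg ha, dif_neg hb] at hab
    have h := congrArg Fin.val hab
    simp only at h
    have h1 : ((a : ℕ) - i + s) % (n - i) = ((b : ℕ) - i + s) % (n - i) := by omega
    have h2 : ((a : ℕ) - i) % (n - i) = ((b : ℕ) - i) % (n - i) :=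
      Nat.ModEq.add_right_cancel' s h1
    have ha' : (a : ℕ) - i < n - i := by have := a.isLt; omega
    have hb' : (b : ℕ) - i < n - i := by have := b.isLt; omega
    rw [Nat.mod_eq_of_lt ha', Nat.mod_eq_of_lt hb'] at h2
    exact Fin.ext (by omega)

/-- The suffix block transposition `κ_{i,s}` as a permutation of `Fin n`. -/
noncomputable def kappa (n i s : ℕ) : Equiv.Perm (Fin n) :=
  Equiv.ofBijective _ (Finite.injective_iff_bijective.mp (kappaFun_injective n i s))

/-- `V_n`: vectors `[a_0,…,a_{n-1}]` with `1 ≤ a_j ≤ j+1` for each `j`. -/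
def Vn (n : ℕ) : Set (Fin n → ℕ) :=
  {a | ∀ j : Fin n, 1 ≤ a j ∧ a j ≤ (j : ℕ) + 1}

/-- `Φ([a_0,…,a_{n-1}]) = κ_{n-2,a_1} ∘ κ_{n-3,a_2} ∘ ⋯ ∘ κ_{1,a_{n-2}} ∘ κ_{0,a_{n-1}}`
(the factor for `j = 0` is `κ_{n-1,a_0}`, which is the identity permutation). -/
noncomputable def Phi (n : ℕ) (a : Fin n → ℕ) : Equiv.Perm (Fin n) :=
  ((List.finRange n).map (fun (j : Fin n) => kappa n (n - 1 - (j : ℕ)) (a j))).prod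

/-- `W_{T,n}`: vectors in `V_n` whose parity (sum of components) is `≡ T (mod n)`. -/
def Wset (n : ℕ) (T : ℤ) : Set (Fin n → ℕ) :=
  {a | a ∈ Vn n ∧ Int.ModEq (n : ℤ) ((∑ j, a j : ℕ) : ℤ) T}

/-- `C_{T,n} = {(Φ(α))⁻¹ : α ∈ W_{T,n}}`. -/
def Cset (n : ℕ) (T : ℤ) : Set (Equiv.Perm (Fin n)) :=
  {π | ∃ a ∈ Wset n T, π = (Phi n a)⁻¹}

/-- `cinv n π j = π⁻¹(j)` as a natural number (junk value `0` out of range). -/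
def cinv (n : ℕ) (π : Equiv.Perm (Fin n)) (j : ℕ) : ℕ :=
  if h : j < n then (π.symm ⟨j, h⟩ : ℕ) else 0

/-- The `i`-th component of a vector indexed by `Fin n` (junk value `0` out of range). -/
def Rcomp (n : ℕ) (v : Fin n → ℕ) (i : ℕ) : ℕ :=
  if h : i < n then v ⟨i, h⟩ else 0

-- auxiliary lemmas

lemma kappa_apply (n i s : ℕ) (j : Fin n) : kappa n i s j = kappaFun n i s j := rfl

lemma kappa_fix {n i s : ℕ} {v : Fin n} (h : (v : ℕ) < i) : kappa n i s v = v := by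
  simp [kappa_apply, kappaFun, h]

lemma listprod_fix {n : ℕ} (l : List (Equiv.Perm (Fin n))) (v : Fin n)
    (h : ∀ p ∈ l, p v = v) : l.prod v = v := by
  induction l with
  | nil => rfl
  | cons p l ih =>
    rw [List.prod_cons, Equiv.Perm.mul_apply,
      ih (fun q hq => h q (List.mem_cons_of_mem _ hq)), h p List.mem_cons_self]

lemma phi_injOn (n : ℕ) : Set.InjOn (Phi n) (Vn n) := by
  intro a ha b hb hab
  have key : ∀ v : ℕ, v < n → ∀ h2 : n - 1 - v < n, a ⟨n - 1 - v, h2⟩ = b ⟨n - 1 - v, h2⟩ := by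
    intro v
    induction v using Nat.strong_induction_on with
    | _ v IH =>
      intro hv h2
      set k := n - 1 - v with hkdef
      have hk : k < n := h2
      have hvk : n - 1 - k = v := by omega
      -- IH reformulated: indices above k agree
      have IH' : ∀ m : ℕ, (hm : m < n) → k < m → a ⟨m, hm⟩ = b ⟨m, hm⟩ := by
        intro m hm hkm
        have h1 : n - 1 - m < v := by omega
        have h3 : n - 1 - (n - 1 - m) < n := by omega
        have := IH (n - 1 - m) h1 (by omega) h3
        have hfin : (⟨n - 1 - (n - 1 - m), h3⟩ : Fin n) = ⟨m, hm⟩ := Fin.ext (by simp; omega)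
        rwa [hfin] at this
      set fa : Fin n → Equiv.Perm (Fin n) := fun j => kappa n (n - 1 - (j : ℕ)) (a j) with hfa
      set fb : Fin n → Equiv.Perm (Fin n) := fun j => kappa n (n - 1 - (j : ℕ)) (b j) with hfb
      set la : List (Equiv.Perm (Fin n)) := (List.finRange n).map fa with hla
      set lb : List (Equiv.Perm (Fin n)) := (List.finRange n).map fb with hlb
      have hlena : la.length = n := by simp [hla]
      have hlenb : lb.length = n := by simp [hlb]
      have hgeta : ∀ (m : ℕ) (hm : m < la.length),
          la[m] = kappa n (n - 1 - m) (a ⟨m, by omega⟩) := by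
        intro m hm
        simp [hla, List.getElem_finRange]
        rfl
      have hgetb : ∀ (m : ℕ) (hm : m < lb.length),
          lb[m] = kappa n (n - 1 - m) (b ⟨m, by omega⟩) := by
        intro m hm
        simp [hlb, List.getElem_finRange]
        rfl
      set s := a ⟨k, hk⟩ with hs
      set t := b ⟨k, hk⟩ with ht
      -- split the products
      have hsplita : Phi n a = ((la.take k).prod * kappa n v s) * (la.drop (k + 1)).prod := by
        rw [Phi, ← hla, ← List.prod_take_mul_prod_drop la k,
          List.drop_eq_getElem_cons (by omega : k < la.length), List.prod_cons,
          hgeta k (by omega), hvk, mul_assoc]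
      have hsplitb : Phi n b = ((lb.take k).prod * kappa n v t) * (lb.drop (k + 1)).prod := by
        rw [Phi, ← hlb, ← List.prod_take_mul_prod_drop lb k,
          List.drop_eq_getElem_cons (by omega : k < lb.length), List.prod_cons,
          hgetb k (by omega), hvk, mul_assoc]
      -- tails agree
      have htail : la.drop (k + 1) = lb.drop (k + 1) := by
        apply List.ext_getElem (by simp [hlena, hlenb])
        intro m hm1 hm2
        rw [List.getElem_drop, List.getElem_drop,
          hgeta (k + 1 + m) (by simp at hm1 ⊢; omega),
          hgetb (k + 1 + m) (by simp at hm2 ⊢; omega),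
          IH' (k + 1 + m) (by simp at hm1; omega) (by omega)]
      -- heads fix v
      set vfin : Fin n := ⟨v, hv⟩ with hvfin
      have hfixa : (la.take k).prod vfin = vfin := by
        apply listprod_fix
        intro p hp
        obtain ⟨m, hm, rfl⟩ := List.mem_iff_getElem.mp hp
        have hm' : m < k := by simp at hm; omega
        rw [List.getElem_take, hgeta m (by omega)]
        exact kappa_fix (by simp [hvfin]; omega)
      have hfixb : (lb.take k).prod vfin = vfin := by
        apply listprod_fix
        intro p hp
        obtain ⟨m, hm, rfl⟩ := List.mem_iff_getElem.mp hp
        have hm' : m < k := by simp at hm; omega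
        rw [List.getElem_take, hgetb m (by omega)]
        exact kappa_fix (by simp [hvfin]; omega)
      -- cancel
      rw [hsplita, hsplitb, htail] at hab
      have e : (la.take k).prod * kappa n v s = (lb.take k).prod * kappa n v t :=
        mul_right_cancel hab
      have e' : (kappa n v s)⁻¹ ((la.take k).prod⁻¹ vfin)
          = (kappa n v t)⁻¹ ((lb.take k).prod⁻¹ vfin) := by
        have := congrArg (fun p : Equiv.Perm (Fin n) => p⁻¹ vfin) e
        simpa [mul_inv_rev, Equiv.Perm.mul_apply] using this
      have hinva : (la.take k).prod⁻¹ vfin = vfin := by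
        conv_lhs => rw [← hfixa]
        exact Equiv.symm_apply_apply _ _
      have hinvb : (lb.take k).prod⁻¹ vfin = vfin := by
        conv_lhs => rw [← hfixb]
        exact Equiv.symm_apply_apply _ _
      rw [hinva, hinvb] at e'
      set w : Fin n := (kappa n v s)⁻¹ vfin with hw
      have hMa : kappa n v s w = vfin := Equiv.apply_symm_apply _ _
      have hMb : kappa n v t w = vfin := by rw [e']; exact Equiv.apply_symm_apply _ _
      -- distill to arithmetic
      have hwv : ¬ ((w : ℕ) < v) := by
        intro hlt
        have := hMa
        rw [kappa_apply, kappaFun, dif_pos hlt] at this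
        have := congrArg Fin.val this
        simp [hvfin] at this
        omega
      have hva : ((w : ℕ) - v + s) % (n - v) = 0 := by
        have := hMa
        rw [kappa_apply, kappaFun, dif_neg hwv] at this
        have := congrArg Fin.val this
        simp [hvfin] at this
        omega
      have hvb : ((w : ℕ) - v + t) % (n - v) = 0 := by
        have := hMb
        rw [kappa_apply, kappaFun, dif_neg hwv] at this
        have := congrArg Fin.val this
        simp [hvfin] at this
        omega
      have hsb : 1 ≤ s ∧ s ≤ n - v := by
        have := ha ⟨k, hk⟩
        simp only [← hs] at this
        constructor
        · exact this.1
        · have := this.2; omega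
      have htb : 1 ≤ t ∧ t ≤ n - v := by
        have := hb ⟨k, hk⟩
        simp only [← ht] at this
        constructor
        · exact this.1
        · have := this.2; omega
      have hd1 : (n - v) ∣ ((w : ℕ) - v + s) := Nat.dvd_of_mod_eq_zero hva
      have hd2 : (n - v) ∣ ((w : ℕ) - v + t) := Nat.dvd_of_mod_eq_zero hvb
      show s = t
      rcases le_total s t with hle | hle
      · have hdvd : (n - v) ∣ (t - s) := by
          have : ((w : ℕ) - v + t) - ((w : ℕ) - v + s) = t - s := by omega
          rw [← this]; exact Nat.dvd_sub hd2 hd1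
        have := Nat.eq_zero_of_dvd_of_lt hdvd
        omega
      · have hdvd : (n - v) ∣ (s - t) := by
          have : ((w : ℕ) - v + s) - ((w : ℕ) - v + t) = s - t := by omega
          rw [← this]; exact Nat.dvd_sub hd1 hd2
        have := Nat.eq_zero_of_dvd_of_lt hdvd
        omega
  funext j
  have hj : (j : ℕ) < n := j.isLt
  have h2 : n - 1 - (n - 1 - (j : ℕ)) < n := by omega
  have := key (n - 1 - (j : ℕ)) (by omega) h2
  have hfin : (⟨n - 1 - (n - 1 - (j : ℕ)), h2⟩ : Fin n) = j := Fin.ext (by simp; omega)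
  rwa [hfin] at this

lemma Wcard (n : ℕ) (hn : 2 ≤ n) (T : ℤ) :
    (Wset n T).ncard = Nat.factorial (n - 1) := by
  classical
  have hnpos : (0 : ℤ) < (n : ℤ) := by exact_mod_cast (by omega : 0 < n)
  set lst : Fin n := ⟨n - 1, by omega⟩ with hlst
  set D : Finset (Fin n → ℕ) :=
    (Fintype.piFinset fun j : Fin n => Finset.Icc 1 ((j : ℕ) + 1)).filter
      (fun a => ((∑ j, a j : ℕ) : ℤ) % (n : ℤ) = T % (n : ℤ)) with hD
  have hWD : Wset n T = ↑D := by
    ext a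
    simp only [Wset, Vn, Set.mem_setOf_eq, hD, Finset.coe_filter, Fintype.mem_piFinset,
      Finset.mem_Icc, Int.ModEq]
  set E : Finset (Fin n → ℕ) :=
    Fintype.piFinset fun j : Fin n =>
      if (j : ℕ) < n - 1 then Finset.Icc 1 ((j : ℕ) + 1) else {1} with hE
  have hEcard : E.card = Nat.factorial (n - 1) := by
    rw [hE, Fintype.card_piFinset]
    obtain ⟨m, rfl⟩ : ∃ m, n = m + 1 := ⟨n - 1, by omega⟩
    rw [Fin.prod_univ_castSucc]
    have h1 : ∀ i : Fin m, ((if ((i.castSucc : Fin (m+1)) : ℕ) < m + 1 - 1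
        then Finset.Icc 1 (((i.castSucc : Fin (m+1)) : ℕ) + 1) else {1}).card) = (i : ℕ) + 1 := by
      intro i
      have : ((i.castSucc : Fin (m+1)) : ℕ) < m + 1 - 1 := by
        simp
      rw [if_pos this]
      simp [Nat.card_Icc]
    rw [Finset.prod_congr rfl (fun i _ => h1 i)]
    have h2 : (((if ((Fin.last m : Fin (m+1)) : ℕ) < m + 1 - 1
        then Finset.Icc 1 (((Fin.last m : Fin (m+1)) : ℕ) + 1) else {1}) : Finset ℕ).card) = 1 := by
      rw [if_neg (by simp)]
      rfl
    rw [h2, mul_one]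
    have : (m + 1 - 1) = m := rfl
    rw [this, ← Finset.prod_range_add_one_eq_factorial]
    exact Fin.prod_univ_eq_prod_range (fun x => x + 1) m
  rw [hWD, Set.ncard_coe_finset, ← hEcard]
  -- the needed last coordinate given the rest
  have hlstval : ((lst : Fin n) : ℕ) = n - 1 := rfl
  apply Finset.card_bij' (i := fun a _ => Function.update a lst 1)
    (j := fun b _ => Function.update b lst
      (((T - (∑ k ∈ Finset.univ.erase lst, b k : ℕ) - 1) % (n : ℤ)).toNat + 1))
  · -- i maps D to E
    intro a ha
    rw [hD, Finset.mem_filter, Fintype.mem_piFinset] at ha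
    rw [hE, Fintype.mem_piFinset]
    intro j
    by_cases hj : j = lst
    · subst hj
      rw [Function.update_self, if_neg (by rw [hlstval]; omega)]
      exact Finset.mem_singleton_self 1
    · have hjv : (j : ℕ) < n - 1 := by
        have := j.isLt
        have : (j : ℕ) ≠ n - 1 := fun h => hj (Fin.ext (by rw [hlstval, h]))
        omega
      rw [Function.update_of_ne hj, if_pos hjv]
      exact ha.1 j
  · -- j maps E to D
    intro b hb
    rw [hE, Fintype.mem_piFinset] at hb
    set sp : ℕ := ∑ k ∈ Finset.univ.erase lst, b k with hsp
    set c : ℕ := ((T - (sp : ℤ) - 1) % (n : ℤ)).toNat + 1 with hc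
    have hmodpos : (0 : ℤ) ≤ (T - (sp : ℤ) - 1) % (n : ℤ) := Int.emod_nonneg _ (by omega)
    have hmodlt : (T - (sp : ℤ) - 1) % (n : ℤ) < (n : ℤ) := Int.emod_lt_of_pos _ hnpos
    have hcbnd : 1 ≤ c ∧ c ≤ n := by
      constructor
      · omega
      · rw [hc]
        have : ((T - (sp : ℤ) - 1) % (n : ℤ)).toNat ≤ n - 1 := by omega
        omega
    rw [hD, Finset.mem_filter, Fintype.mem_piFinset]
    constructor
    · intro j
      by_cases hj : j = lst
      · subst hj
        rw [Function.update_self, Finset.mem_Icc, hlstval]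
        omega
      · rw [Function.update_of_ne hj]
        have := hb j
        have hjv : (j : ℕ) < n - 1 := by
          have := j.isLt
          have : (j : ℕ) ≠ n - 1 := fun h => hj (Fin.ext (by rw [hlstval, h]))
          omega
        rwa [if_pos hjv] at this
    · have hsplit : (∑ j, Function.update b lst c j)
          = c + ∑ k ∈ Finset.univ.erase lst, Function.update b lst c k := by
        have h := (Finset.add_sum_erase Finset.univ (Function.update b lst c)
          (Finset.mem_univ lst)).symm
        simpa using h
      have herase : ∑ k ∈ Finset.univ.erase lst, Function.update b lst c k = sp := by
        apply Finset.sum_congr rfl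
        intro k hk
        rw [Function.update_of_ne (Finset.ne_of_mem_erase hk)]
      rw [hsplit, herase]
      have htn : ((((T - (sp : ℤ) - 1) % (n : ℤ)).toNat : ℤ)) = (T - (sp : ℤ) - 1) % (n : ℤ) :=
        Int.toNat_of_nonneg hmodpos
      have key : ((c + sp : ℕ) : ℤ) ≡ T [ZMOD (n : ℤ)] := by
        rw [hc]
        push_cast
        rw [htn]
        calc ((T - (sp : ℤ) - 1) % (n : ℤ)) + 1 + (sp : ℤ)
            ≡ (T - (sp : ℤ) - 1) + 1 + (sp : ℤ) [ZMOD (n : ℤ)] := by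
              apply Int.ModEq.add_right
              apply Int.ModEq.add_right
              exact Int.emod_emod_of_dvd _ dvd_rfl
          _ = T := by ring
      exact key


  · -- left inverse : j (i a) = a
    intro a ha
    have haD := ha
    rw [hD, Finset.mem_filter, Fintype.mem_piFinset] at haD
    obtain ⟨hmem, hsum⟩ := haD
    have hsplit : (∑ j, a j) = a lst + ∑ k ∈ Finset.univ.erase lst, a k :=
      (Finset.add_sum_erase _ _ (Finset.mem_univ lst)).symm
    have herase : ∑ k ∈ Finset.univ.erase lst, Function.update a lst 1 k
        = ∑ k ∈ Finset.univ.erase lst, a k := by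
      apply Finset.sum_congr rfl
      intro k hk
      rw [Function.update_of_ne (Finset.ne_of_mem_erase hk)]
    funext k
    by_cases hk : k = lst
    · subst hk
      rw [Function.update_self, herase]
      set sp : ℤ := ((∑ k ∈ Finset.univ.erase lst, a k : ℕ) : ℤ) with hsp
      have hbnd := hmem lst
      rw [Finset.mem_Icc] at hbnd
      have halst : 1 ≤ a lst ∧ a lst ≤ n := by
        constructor
        · exact hbnd.1
        · have := hbnd.2; rw [hlstval] at this; omega
      have hmodeq : (T - sp - 1) % (n : ℤ) = ((a lst : ℤ) - 1) % (n : ℤ) := by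
        have h1 : ((a lst : ℤ) + sp) % (n : ℤ) = T % (n : ℤ) := by
          have h := hsum
          rw [hsplit] at h
          push_cast at h
          rw [hsp]
          push_cast
          exact h
        have h2 : ((a lst : ℤ) - 1) ≡ (T - sp - 1) [ZMOD (n : ℤ)] := by
          have : ((a lst : ℤ) + sp) ≡ T [ZMOD (n : ℤ)] := h1
          have h3 := this.sub_right (sp + 1)
          calc ((a lst : ℤ) - 1) = ((a lst : ℤ) + sp) - (sp + 1) := by ring
            _ ≡ T - (sp + 1) [ZMOD (n : ℤ)] := h3
            _ = T - sp - 1 := by ring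
        exact h2.symm
      have hsmall : ((a lst : ℤ) - 1) % (n : ℤ) = (a lst : ℤ) - 1 := by
        apply Int.emod_eq_of_lt
        · have := halst.1; omega
        · have := halst.2
          have : ((a lst : ℤ)) ≤ (n : ℤ) := by exact_mod_cast this
          omega
      rw [hmodeq, hsmall]
      have : ((a lst : ℤ) - 1).toNat = a lst - 1 := by omega
      rw [this]
      omega
    · rw [Function.update_of_ne hk, Function.update_of_ne hk]
  · -- right inverse : i (j b) = b
    intro b hb
    rw [hE, Fintype.mem_piFinset] at hb
    funext k
    by_cases hk : k = lst
    · subst hk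
      rw [Function.update_self]
      have := hb lst
      rw [if_neg (by rw [hlstval]; omega)] at this
      rw [Finset.mem_singleton] at this
      exact this.symm
    · rw [Function.update_of_ne hk, Function.update_of_ne hk]

theorem stmt_3 (n : ℕ) (hn : 2 ≤ n) (T : ℤ) :
    (Cset n T).ncard = Nat.factorial (n - 1) := by
  have himg : Cset n T = (fun a => (Phi n a)⁻¹) '' Wset n T := by
    ext π
    simp only [Cset, Set.mem_setOf_eq, Set.mem_image]
    constructor
    · rintro ⟨a, ha, rfl⟩; exact ⟨a, ha, rfl⟩
    · rintro ⟨a, ha, rfl⟩; exact ⟨a, ha, rfl⟩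
  rw [himg, Set.ncard_image_of_injOn, Wcard n hn T]
  intro a ha b hb h
  exact phi_injOn n ha.1 hb.1 (inv_inj.mp h)
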